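/- Let L ⊂ ℝⁿ be a lattice, let s > 0, and let r ≥ s·√(n/(2π)). Then ∑_{y ∈ L, ‖y‖ ≥ r} ρ_s(y) ≤ exp(−π·x²) · ρ_s(L), where x := r/s − √(n/(2π)). Equivalently, for Y drawn from the discrete Gaussian distribution D_{L,s}, the probability that ‖Y‖ ≥ r is at most exp(−π·x²). -/

import Mathlib

open scoped Real BigOperators RealInnerProductSpace
open Real Filter MeasureTheory Complex

set_option maxHeartbeats 1000000

noncomputable section


lemma summable_exp_neg_int_sq {c : ℝ} (hc : 0 < c) :
    Summable fun k : ℤ => rexp (-c * (k : ℝ) ^ 2) := by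
  have hnat : Summable fun k : ℕ => rexp (-c * (k : ℝ) ^ 2) := by
    refine Summable.of_nonneg_of_le (fun k => (Real.exp_pos _).le) (fun k => ?_)
      (summable_geometric_of_lt_one (Real.exp_pos (-c)).le
        (Real.exp_lt_one_iff.2 (by linarith)))
    rw [← Real.exp_nat_mul]
    apply Real.exp_le_exp.2
    have : (k : ℝ) ≤ (k : ℝ) ^ 2 := by
      rcases Nat.eq_zero_or_pos k with h | h
      · simp [h]
      · nlinarith [(by exact_mod_cast h : (1:ℝ) ≤ (k:ℝ))]
    nlinarith
  apply Summable.of_nat_of_neg <;> simpa using hnat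

lemma summable_pi_exp (n : ℕ) {c : ℝ} (hc : 0 < c) :
    Summable fun z : Fin n → ℤ => ∏ i, rexp (-c * (z i : ℝ) ^ 2) := by
  induction n with
  | zero =>
      exact summable_of_finite_support (Set.toFinite _)
  | succ m ih =>
      have h2 : Summable (fun p : ℤ × (Fin m → ℤ) =>
          rexp (-c * (p.1 : ℝ) ^ 2) * ∏ i, rexp (-c * (p.2 i : ℝ) ^ 2)) := by
        have := Summable.mul_of_nonneg (f := fun k : ℤ => rexp (-c * (k : ℝ) ^ 2))
          (g := fun w : Fin m → ℤ => ∏ i, rexp (-c * (w i : ℝ) ^ 2))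
          (summable_exp_neg_int_sq hc) ih
          (fun k => (Real.exp_pos _).le)
          (fun z => Finset.prod_nonneg fun i _ => (Real.exp_pos _).le)
        exact this
      have h3 := h2.comp_injective (Fin.consEquiv fun _ => ℤ).symm.injective
      apply h3.congr
      intro z
      simp [Fin.prod_univ_succ, Fin.tail]


variable {n : ℕ}

local notation "E" => EuclideanSpace ℝ (Fin n)

lemma kernel_eq {σ : ℝ} (hσ : 0 < σ) (y : E) (ξ : E) :
    Complex.exp (-(((π : ℝ) * σ ^ 2 : ℝ) : ℂ) * (‖ξ‖ : ℂ) ^ 2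
        + (2 * (π : ℝ) * Complex.I) * (⟪y, ξ⟫ : ℂ)) =
      (rexp (-(π * σ ^ 2) * ‖ξ‖ ^ 2) : ℂ) * Complex.exp (2 * π * Complex.I * (⟪ξ, y⟫ : ℂ)) := by
  rw [Complex.exp_add, real_inner_comm y ξ]
  norm_cast

lemma integrable_kernel {σ : ℝ} (hσ : 0 < σ) (y : E) :
    Integrable (fun ξ : E =>
      (rexp (-(π * σ ^ 2) * ‖ξ‖ ^ 2) : ℂ) * Complex.exp (2 * π * Complex.I * (⟪ξ, y⟫ : ℂ))) := by
  have hb : 0 < ((((π : ℝ) * σ ^ 2 : ℝ) : ℂ)).re := by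
    simp only [Complex.ofReal_re]
    positivity
  exact (GaussianFourier.integrable_cexp_neg_mul_sq_norm_add hb (2 * (π : ℝ) * Complex.I) y).congr
    (Filter.Eventually.of_forall fun ξ => (kernel_eq hσ y ξ))

lemma kernel_fourier {σ : ℝ} (hσ : 0 < σ) (y : E) :
    ∫ ξ : E, (rexp (-(π * σ ^ 2) * ‖ξ‖ ^ 2) : ℂ)
        * Complex.exp (2 * π * Complex.I * (⟪ξ, y⟫ : ℂ)) =
      (((σ ^ n)⁻¹ * rexp (-π * ‖y‖ ^ 2 / σ ^ 2) : ℝ) : ℂ) := by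
  have hb : 0 < ((((π : ℝ) * σ ^ 2 : ℝ) : ℂ)).re := by
    simp only [Complex.ofReal_re]
    positivity
  have key := GaussianFourier.integral_cexp_neg_mul_sq_norm_add (V := E) hb (2 * (π : ℝ) * Complex.I) y
  rw [integral_congr_ae (Filter.Eventually.of_forall fun ξ => (kernel_eq hσ y ξ))] at key
  rw [key]
  have hrank : (Module.finrank ℝ E) = n := finrank_euclideanSpace_fin
  rw [hrank]
  have h1 : (((π : ℝ) : ℂ) / (((π : ℝ) * σ ^ 2 : ℝ) : ℂ)) = (((σ ^ 2)⁻¹ : ℝ) : ℂ) := by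
    have hπ : ((π : ℝ) : ℂ) ≠ 0 := by simpa using Real.pi_ne_zero
    have hσ' : ((σ : ℝ) : ℂ) ≠ 0 := by simpa using hσ.ne'
    push_cast
    field_simp
  have h2 : ((n : ℂ) / 2) = (((n : ℝ) / 2 : ℝ) : ℂ) := by push_cast; ring
  have h3 : (((σ ^ 2)⁻¹ : ℝ) : ℂ) ^ (((n : ℝ) / 2 : ℝ) : ℂ) = (((σ ^ n)⁻¹ : ℝ) : ℂ) := by
    rw [← Complex.ofReal_cpow (by positivity)]
    congr 1
    have e1 : ((σ : ℝ) ^ 2)⁻¹ = σ ^ ((-2 : ℝ)) := by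
      rw [Real.rpow_neg hσ.le]
      norm_num [Real.rpow_two]
    rw [e1, ← Real.rpow_natCast σ n, ← Real.rpow_neg_one (σ ^ (n:ℝ)), ← Real.rpow_mul hσ.le,
      ← Real.rpow_mul hσ.le]
    ring_nf
  have h4 : (2 * (π : ℝ) * Complex.I) ^ 2 * (‖y‖ : ℂ) ^ 2 / (4 * (((π : ℝ) * σ ^ 2 : ℝ) : ℂ))
      = ((-π * ‖y‖ ^ 2 / σ ^ 2 : ℝ) : ℂ) := by
    have hπ : ((π : ℝ) : ℂ) ≠ 0 := by
      simpa using Real.pi_ne_zero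
    have hσ' : ((σ : ℝ) : ℂ) ≠ 0 := by
      simpa using hσ.ne'
    push_cast
    field_simp
    ring_nf
    rw [Complex.I_sq]
    ring
  rw [h1, h2, h3, h4, ← Complex.ofReal_exp, ← Complex.ofReal_mul]

section PSD2

lemma psd_double_sum {σ₁ σ₂ : ℝ} (h1 : 0 < σ₁) (h12 : σ₁ ≤ σ₂)
    {ι : Type*} (A : Finset ι) (p : ι → E) :
    0 ≤ ∑ i ∈ A, ∑ j ∈ A,
      ((σ₁ ^ n)⁻¹ * rexp (-π * ‖p i - p j‖ ^ 2 / σ₁ ^ 2) -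
       (σ₂ ^ n)⁻¹ * rexp (-π * ‖p i - p j‖ ^ 2 / σ₂ ^ 2)) := by
  classical
  have h2 : 0 < σ₂ := lt_of_lt_of_le h1 h12
  set g : E → ℝ := fun ξ => rexp (-(π * σ₁ ^ 2) * ‖ξ‖ ^ 2) - rexp (-(π * σ₂ ^ 2) * ‖ξ‖ ^ 2)
    with hg_def
  have hg : ∀ ξ, 0 ≤ g ξ := by
    intro ξ
    have hss : σ₁ ^ 2 ≤ σ₂ ^ 2 := by nlinarith
    have : -(π * σ₂ ^ 2) * ‖ξ‖ ^ 2 ≤ -(π * σ₁ ^ 2) * ‖ξ‖ ^ 2 := by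
      have h5 := mul_le_mul_of_nonneg_right
        (mul_le_mul_of_nonneg_left hss Real.pi_pos.le) (sq_nonneg ‖ξ‖)
      linarith
    simpa [hg_def] using sub_nonneg.2 (Real.exp_le_exp.2 this)
  have hint : ∀ y : E, Integrable (fun ξ : E => ((g ξ : ℝ) : ℂ)
      * Complex.exp (2 * π * Complex.I * (⟪ξ, y⟫ : ℂ))) := by
    intro y
    have := (integrable_kernel h1 y).sub (integrable_kernel h2 y)
    apply this.congr
    filter_upwards with ξ
    simp [hg_def, sub_mul]
  -- step A : each entry as an integral
  have stepA : ∀ y : E, (((σ₁ ^ n)⁻¹ * rexp (-π * ‖y‖ ^ 2 / σ₁ ^ 2) -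
      (σ₂ ^ n)⁻¹ * rexp (-π * ‖y‖ ^ 2 / σ₂ ^ 2) : ℝ) : ℂ) =
      ∫ ξ : E, ((g ξ : ℝ) : ℂ) * Complex.exp (2 * π * Complex.I * (⟪ξ, y⟫ : ℂ)) := by
    intro y
    have e : ∀ ξ : E, ((g ξ : ℝ) : ℂ) * Complex.exp (2 * π * Complex.I * (⟪ξ, y⟫ : ℂ))
        = (rexp (-(π * σ₁ ^ 2) * ‖ξ‖ ^ 2) : ℂ) * Complex.exp (2 * π * Complex.I * (⟪ξ, y⟫ : ℂ))
          - (rexp (-(π * σ₂ ^ 2) * ‖ξ‖ ^ 2) : ℂ) * Complex.exp (2 * π * Complex.I * (⟪ξ, y⟫ : ℂ)) := by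
      intro ξ
      simp [hg_def, sub_mul]
    rw [integral_congr_ae (Filter.Eventually.of_forall e),
      integral_sub (integrable_kernel h1 y) (integrable_kernel h2 y),
      kernel_fourier h1 y, kernel_fourier h2 y]
    push_cast
    ring
  set S : E → ℂ := fun ξ => ∑ i ∈ A, Complex.exp (2 * π * Complex.I * (⟪ξ, p i⟫ : ℂ)) with hS_def
  have hpair : ∀ (ξ : E) (i j : ι),
      ((g ξ : ℝ) : ℂ) * Complex.exp (2 * π * Complex.I * (⟪ξ, p i - p j⟫ : ℂ))
      = ((g ξ : ℝ) : ℂ) * (Complex.exp (2 * π * Complex.I * (⟪ξ, p i⟫ : ℂ)) *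
          (starRingEnd ℂ) (Complex.exp (2 * π * Complex.I * (⟪ξ, p j⟫ : ℂ)))) := by
    intro ξ i j
    congr 1
    rw [← Complex.exp_conj, ← Complex.exp_add]
    congr 1
    rw [inner_sub_right]
    simp only [map_mul, Complex.conj_I, Complex.conj_ofReal, map_ofNat]
    push_cast
    ring
  have key : ((∑ i ∈ A, ∑ j ∈ A,
      ((σ₁ ^ n)⁻¹ * rexp (-π * ‖p i - p j‖ ^ 2 / σ₁ ^ 2) -
       (σ₂ ^ n)⁻¹ * rexp (-π * ‖p i - p j‖ ^ 2 / σ₂ ^ 2)) : ℝ) : ℂ)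
      = ((∫ ξ : E, g ξ * Complex.normSq (S ξ) : ℝ) : ℂ) := by
    rw [Complex.ofReal_sum]
    calc ∑ i ∈ A, (((∑ j ∈ A,
        ((σ₁ ^ n)⁻¹ * rexp (-π * ‖p i - p j‖ ^ 2 / σ₁ ^ 2) -
         (σ₂ ^ n)⁻¹ * rexp (-π * ‖p i - p j‖ ^ 2 / σ₂ ^ 2)) : ℝ)) : ℂ)
        = ∑ q ∈ A ×ˢ A, ∫ ξ : E, ((g ξ : ℝ) : ℂ)
            * Complex.exp (2 * π * Complex.I * (⟪ξ, p q.1 - p q.2⟫ : ℂ)) := by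
          rw [Finset.sum_product]
          refine Finset.sum_congr rfl fun i _ => ?_
          rw [Complex.ofReal_sum]
          exact Finset.sum_congr rfl fun j _ => stepA (p i - p j)
      _ = ∫ ξ : E, ∑ q ∈ A ×ˢ A, ((g ξ : ℝ) : ℂ)
            * Complex.exp (2 * π * Complex.I * (⟪ξ, p q.1 - p q.2⟫ : ℂ)) := by
          rw [MeasureTheory.integral_finset_sum _ (fun q _ => hint (p q.1 - p q.2))]
      _ = ∫ ξ : E, ((g ξ * Complex.normSq (S ξ) : ℝ) : ℂ) := by
          refine integral_congr_ae (Filter.Eventually.of_forall fun ξ => ?_)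
          show (∑ q ∈ A ×ˢ A, ((g ξ : ℝ) : ℂ)
              * Complex.exp (2 * π * Complex.I * (⟪ξ, p q.1 - p q.2⟫ : ℂ)))
            = ((g ξ * Complex.normSq (S ξ) : ℝ) : ℂ)
          rw [Finset.sum_product]
          simp_rw [hpair ξ]
          have : (∑ i ∈ A, ∑ j ∈ A, ((g ξ : ℝ) : ℂ) *
              (Complex.exp (2 * π * Complex.I * (⟪ξ, p i⟫ : ℂ)) *
               (starRingEnd ℂ) (Complex.exp (2 * π * Complex.I * (⟪ξ, p j⟫ : ℂ)))))
              = ((g ξ : ℝ) : ℂ) * (S ξ * (starRingEnd ℂ) (S ξ)) := by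
            rw [hS_def]
            simp only [map_sum]
            rw [Finset.sum_mul_sum, Finset.mul_sum]
            refine Finset.sum_congr rfl fun i _ => ?_
            rw [Finset.mul_sum]
          rw [this, Complex.mul_conj, ← Complex.ofReal_mul]
      _ = ((∫ ξ : E, g ξ * Complex.normSq (S ξ) : ℝ) : ℂ) := integral_ofReal
  have dsum_eq : (∑ i ∈ A, ∑ j ∈ A,
      ((σ₁ ^ n)⁻¹ * rexp (-π * ‖p i - p j‖ ^ 2 / σ₁ ^ 2) -
       (σ₂ ^ n)⁻¹ * rexp (-π * ‖p i - p j‖ ^ 2 / σ₂ ^ 2)))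
      = ∫ ξ : E, g ξ * Complex.normSq (S ξ) := by
    exact_mod_cast key
  rw [dsum_eq]
  exact integral_nonneg fun ξ => mul_nonneg (hg ξ) (Complex.normSq_nonneg _)

end PSD2

section Mono

lemma ratio_tendsto (M : ℕ) :
    Filter.Tendsto (fun T : ℕ => (((T - M + 1 : ℕ) : ℝ) / ((T + 1 : ℕ) : ℝ)) ^ n)
      atTop (nhds 1) := by
  have h0 : Filter.Tendsto (fun T : ℕ => 1 - (M : ℝ) * (1 / ((T : ℝ) + 1)))
      atTop (nhds 1) := by
    have := (tendsto_one_div_add_atTop_nhds_zero_nat).const_mul (M : ℝ)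
    have h1 := (tendsto_const_nhds (x := (1:ℝ)) (f := atTop (α := ℕ))).sub this
    simpa using h1
  have heq : ∀ᶠ T : ℕ in atTop, (((T - M + 1 : ℕ) : ℝ) / ((T + 1 : ℕ) : ℝ))
      = 1 - (M : ℝ) * (1 / ((T : ℝ) + 1)) := by
    filter_upwards [eventually_ge_atTop M] with T hT
    have hTM : ((T - M : ℕ) : ℝ) = (T : ℝ) - M := by
      push_cast [Nat.cast_sub hT]
      ring
    have hpos : ((T : ℝ) + 1) ≠ 0 := by positivity
    push_cast
    rw [hTM]
    field_simp
    ring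
  have := h0.congr' (heq.mono fun T h => h.symm)
  simpa using this.pow n

lemma theta_mono (x : (Fin n → ℤ) → E)
    (hadd : ∀ z w, x (z - w) = x z - x w)
    (hsum : ∀ σ : ℝ, 0 < σ → Summable fun z : Fin n → ℤ => rexp (-π * ‖x z‖ ^ 2 / σ ^ 2))
    {σ₁ σ₂ : ℝ} (h1 : 0 < σ₁) (h12 : σ₁ ≤ σ₂) :
    (σ₂ ^ n)⁻¹ * ∑' z : Fin n → ℤ, rexp (-π * ‖x z‖ ^ 2 / σ₂ ^ 2) ≤
      (σ₁ ^ n)⁻¹ * ∑' z : Fin n → ℤ, rexp (-π * ‖x z‖ ^ 2 / σ₁ ^ 2) := by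
  classical
  have h2 : 0 < σ₂ := lt_of_lt_of_le h1 h12
  set K₁ : (Fin n → ℤ) → ℝ := fun d => (σ₁ ^ n)⁻¹ * rexp (-π * ‖x d‖ ^ 2 / σ₁ ^ 2) with hK₁
  set K₂ : (Fin n → ℤ) → ℝ := fun d => (σ₂ ^ n)⁻¹ * rexp (-π * ‖x d‖ ^ 2 / σ₂ ^ 2) with hK₂
  have hsum₁ : Summable K₁ := (hsum σ₁ h1).mul_left _
  have hsum₂ : Summable K₂ := (hsum σ₂ h2).mul_left _
  set φ : (Fin n → ℤ) → ℝ := fun d => K₁ d - K₂ d with hφ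
  have hφsum : Summable φ := hsum₁.sub hsum₂
  suffices hkey : 0 ≤ ∑' d, φ d by
    have := hkey
    rw [hφ] at this
    rw [Summable.tsum_sub hsum₁ hsum₂] at this
    rw [hK₁, hK₂, tsum_mul_left, tsum_mul_left] at this
    linarith
  -- boxes
  set B : ℕ → Finset (Fin n → ℤ) := fun T => Fintype.piFinset fun _ => Finset.Icc (0:ℤ) (T:ℤ)
    with hB
  have hcardB : ∀ T, (B T).card = (T+1) ^ n := by
    intro T
    rw [hB]
    rw [Fintype.card_piFinset]
    have : (Finset.Icc (0:ℤ) (T:ℤ)).card = T + 1 := by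
      rw [Int.card_Icc]
      omega
    simp only [this, Finset.prod_const, Finset.card_univ, Fintype.card_fin]
  set N : ℕ → (Fin n → ℤ) → ℕ := fun T d =>
    (((B T) ×ˢ (B T)).filter fun q => q.1 - q.2 = d).card with hN
  -- upper bound on N
  have hNle : ∀ T d, N T d ≤ (T+1) ^ n := by
    intro T d
    rw [hN, ← hcardB T]
    apply Finset.card_le_card_of_injOn (fun q => q.1)
    · intro q hq
      simp only [Finset.mem_coe, Finset.mem_filter, Finset.mem_product] at hq
      exact hq.1.1
    · intro q hq q' hq' hqq
      simp only [Finset.mem_coe, Finset.mem_filter, Finset.mem_product] at hq hq'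
      have : q.2 = q'.2 := by
        have e1 : q.1 - q.2 = d := hq.2
        have e2 : q'.1 - q'.2 = d := hq'.2
        have : q.1 - q.2 = q'.1 - q'.2 := by rw [e1, e2]
        simp only at hqq
        funext i
        have := congrFun this i
        have h2 := congrFun hqq i
        simp only [Pi.sub_apply] at this h2 ⊢
        omega
      exact Prod.ext hqq this
  -- lower bound on N
  have hNge : ∀ T d, (Finset.univ.sup fun i => (d i).natAbs) ≤ T →
      (T - (Finset.univ.sup fun i => (d i).natAbs) + 1) ^ n ≤ N T d := by
    intro T d hT
    set M : ℕ := Finset.univ.sup fun i => (d i).natAbs with hM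
    have habs : ∀ i, (d i).natAbs ≤ M := fun i => Finset.le_sup (f := fun i => (d i).natAbs) (Finset.mem_univ i)
    set C : Finset (Fin n → ℤ) := Fintype.piFinset fun i =>
      Finset.Icc (max 0 (d i)) (max 0 (d i) + ((T - M : ℕ) : ℤ)) with hC
    have hcardC : C.card = (T - M + 1) ^ n := by
      rw [hC, Fintype.card_piFinset]
      have : ∀ i : Fin n, (Finset.Icc (max 0 (d i)) (max 0 (d i) + ((T - M : ℕ) : ℤ))).card
          = T - M + 1 := by
        intro i
        rw [Int.card_Icc]
        omega
      simp only [this, Finset.prod_const, Finset.card_univ, Fintype.card_fin]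
    rw [← hcardC, hN]
    apply Finset.card_le_card_of_injOn (fun z => (z, z - d))
    · intro z hz
      simp only [Finset.mem_coe, hC, Fintype.mem_piFinset, Finset.mem_Icc] at hz
      simp only [Finset.mem_coe, Finset.mem_filter, Finset.mem_product, hB,
        Fintype.mem_piFinset, Finset.mem_Icc]
      have hTM : ((T - M : ℕ) : ℤ) = (T : ℤ) - M := by
        omega
      refine ⟨⟨fun i => ?_, fun i => ?_⟩, by funext i; simp⟩
      · have hzi := hz i
        have h5 : (d i).natAbs ≤ M := habs i
        rw [hTM] at hzi
        rcases le_or_gt (d i) 0 with h4 | h4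
        · rw [max_eq_left h4] at hzi
          omega
        · rw [max_eq_right h4.le] at hzi
          omega
      · have hzi := hz i
        have h5 : (d i).natAbs ≤ M := habs i
        rw [hTM] at hzi
        simp only [Pi.sub_apply]
        rcases le_or_gt (d i) 0 with h4 | h4
        · rw [max_eq_left h4] at hzi
          omega
        · rw [max_eq_right h4.le] at hzi
          omega
    · intro z _ z' _ h
      simpa using congrArg Prod.fst h
  -- box sums are nonnegative
  have hbox : ∀ T : ℕ, 0 ≤ ∑' d : Fin n → ℤ, ((((T : ℝ) + 1) ^ n)⁻¹ * ((N T d : ℝ) * φ d)) := by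
    intro T
    have hsupp : ∀ d ∉ ((B T ×ˢ B T).image fun q => q.1 - q.2),
        ((((T : ℝ) + 1) ^ n)⁻¹ * ((N T d : ℝ) * φ d)) = 0 := by
      intro d hd
      have hN0 : N T d = 0 := by
        rw [hN]
        rw [Finset.card_eq_zero, Finset.filter_eq_empty_iff]
        intro q hq hcontra
        exact hd (Finset.mem_image.2 ⟨q, hq, hcontra⟩)
      rw [hN0]
      simp
    rw [tsum_eq_sum hsupp, ← Finset.mul_sum]
    apply mul_nonneg (by positivity)
    have hmaps : ∀ q ∈ B T ×ˢ B T, q.1 - q.2 ∈ (B T ×ˢ B T).image (fun q => q.1 - q.2) :=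
      fun q hq => Finset.mem_image_of_mem _ hq
    have hfib := Finset.sum_fiberwise_of_maps_to hmaps (fun q => φ (q.1 - q.2))
    have hinner : ∀ d ∈ (B T ×ˢ B T).image (fun q => q.1 - q.2),
        (∑ q ∈ (B T ×ˢ B T).filter (fun q => q.1 - q.2 = d), φ (q.1 - q.2))
          = (N T d : ℝ) * φ d := by
      intro d _
      rw [Finset.sum_congr rfl (fun q hq => by rw [(Finset.mem_filter.1 hq).2])]
      rw [Finset.sum_const, hN, nsmul_eq_mul]
    have heq2 : (∑ d ∈ (B T ×ˢ B T).image (fun q => q.1 - q.2), (N T d : ℝ) * φ d)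
        = ∑ q ∈ B T ×ˢ B T, φ (q.1 - q.2) := by
      rw [← hfib]
      exact Finset.sum_congr rfl fun d hd => (hinner d hd).symm
    rw [heq2, Finset.sum_product]
    have hent : ∀ z w : Fin n → ℤ, φ (z - w) =
        ((σ₁ ^ n)⁻¹ * rexp (-π * ‖x z - x w‖ ^ 2 / σ₁ ^ 2) -
         (σ₂ ^ n)⁻¹ * rexp (-π * ‖x z - x w‖ ^ 2 / σ₂ ^ 2)) := by
      intro z w
      rw [hφ, hK₁, hK₂]
      simp only [hadd]
    calc (0:ℝ) ≤ ∑ z ∈ B T, ∑ w ∈ B T,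
        ((σ₁ ^ n)⁻¹ * rexp (-π * ‖x z - x w‖ ^ 2 / σ₁ ^ 2) -
         (σ₂ ^ n)⁻¹ * rexp (-π * ‖x z - x w‖ ^ 2 / σ₂ ^ 2)) :=
          psd_double_sum h1 h12 (B T) x
      _ = ∑ z ∈ B T, ∑ w ∈ B T, φ (z - w) := by
          refine Finset.sum_congr rfl fun z _ => Finset.sum_congr rfl fun w _ => ?_
          rw [hent]
  -- the limit
  have hlim : Filter.Tendsto
      (fun T : ℕ => ∑' d : Fin n → ℤ, ((((T : ℝ) + 1) ^ n)⁻¹ * ((N T d : ℝ) * φ d)))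
      atTop (nhds (∑' d, φ d)) := by
    apply tendsto_tsum_of_dominated_convergence (bound := fun d => K₁ d + K₂ d)
      (hsum₁.add hsum₂)
    · intro d
      set M : ℕ := Finset.univ.sup fun i => (d i).natAbs with hM
      have hratio : Filter.Tendsto (fun T : ℕ => (((T : ℝ) + 1) ^ n)⁻¹ * (N T d : ℝ))
          atTop (nhds 1) := by
        apply tendsto_of_tendsto_of_tendsto_of_le_of_le' (ratio_tendsto (n := n) M)
          tendsto_const_nhds
        · filter_upwards [Filter.eventually_ge_atTop M] with T hT
          have hlow := hNge T d hT
          have hlow' : (((T - M + 1 : ℕ) : ℝ)) ^ n ≤ (N T d : ℝ) := by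
            exact_mod_cast hlow
          have hden : (0:ℝ) < ((T + 1 : ℕ) : ℝ) ^ n := by positivity
          rw [div_pow]
          rw [div_le_iff₀ hden]
          have hcast : ((T + 1 : ℕ) : ℝ) = (T : ℝ) + 1 := by push_cast; ring
          rw [hcast]
          calc ((T - M + 1 : ℕ) : ℝ) ^ n ≤ (N T d : ℝ) := hlow'
            _ = (((T:ℝ)+1) ^ n)⁻¹ * (N T d : ℝ) * ((T:ℝ)+1) ^ n := by
                field_simp
        · filter_upwards with T
          have hup := hNle T d
          have hup' : (N T d : ℝ) ≤ ((T:ℝ)+1) ^ n := by exact_mod_cast hup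
          rw [inv_mul_le_iff₀ (by positivity)]
          simpa using hup'
      have := hratio.mul_const (φ d)
      rw [one_mul] at this
      exact this.congr (fun T => by ring)
    · filter_upwards with T
      intro d
      have hup := hNle T d
      have hup' : (N T d : ℝ) ≤ ((T:ℝ)+1) ^ n := by exact_mod_cast hup
      have hc : (0:ℝ) ≤ (((T : ℝ) + 1) ^ n)⁻¹ * (N T d : ℝ) := by positivity
      have hc1 : (((T : ℝ) + 1) ^ n)⁻¹ * (N T d : ℝ) ≤ 1 := by
        rw [inv_mul_le_iff₀ (by positivity)]
        simpa using hup'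
      have habs : |φ d| ≤ K₁ d + K₂ d := by
        rw [hφ]
        refine le_trans (abs_sub _ _) ?_
        have e1 : |K₁ d| = K₁ d := abs_of_nonneg (by rw [hK₁]; positivity)
        have e2 : |K₂ d| = K₂ d := abs_of_nonneg (by rw [hK₂]; positivity)
        rw [e1, e2]
      calc ‖(((T : ℝ) + 1) ^ n)⁻¹ * ((N T d : ℝ) * φ d)‖
          = ((((T : ℝ) + 1) ^ n)⁻¹ * (N T d : ℝ)) * |φ d| := by
            rw [Real.norm_eq_abs, abs_mul, abs_mul,
              _root_.abs_of_nonneg (by positivity : (0:ℝ) ≤ (((T : ℝ) + 1) ^ n)⁻¹),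
              _root_.abs_of_nonneg (by positivity : (0:ℝ) ≤ (N T d : ℝ))]
            ring
        _ ≤ 1 * |φ d| := by
            apply mul_le_mul_of_nonneg_right hc1 (abs_nonneg _)
        _ ≤ K₁ d + K₂ d := by rw [one_mul]; exact habs
  exact ge_of_tendsto' hlim hbox

end Mono

section Lat

lemma summable_lattice_gauss (hn : 0 < n) (b : Fin n → E) (hb : LinearIndependent ℝ b)
    {σ : ℝ} (hσ : 0 < σ) :
    Summable fun z : Fin n → ℤ => rexp (-π * ‖∑ i, (z i : ℝ) • b i‖ ^ 2 / σ ^ 2) := by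
  haveI : Nonempty (Fin n) := ⟨⟨0, hn⟩⟩
  have hcard : Fintype.card (Fin n) = Module.finrank ℝ E := by
    simp [finrank_euclideanSpace_fin]
  set Bb := basisOfLinearIndependentOfCardEqFinrank hb hcard with hBbdef
  have hBb : ⇑Bb = b := coe_basisOfLinearIndependentOfCardEqFinrank hb hcard
  set ce := (Bb.equivFun.symm : (Fin n → ℝ) ≃ₗ[ℝ] E).toContinuousLinearEquiv with hce
  have hK := ce.antilipschitz
  set K := ‖(↑ce.symm : E →L[ℝ] Fin n → ℝ)‖₊ with hKdef
  have hKv : ∀ v : Fin n → ℝ, ‖v‖ ≤ (K : ℝ) * ‖ce v‖ := by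
    intro v
    have := hK.le_mul_dist v 0
    simpa [dist_eq_norm] using this
  have hKpos : 0 < (K : ℝ) := by
    by_contra hc
    push_neg at hc
    have hK0 : (K : ℝ) = 0 := le_antisymm hc K.2
    have h1 := hKv (fun _ => (1:ℝ))
    rw [hK0, zero_mul] at h1
    have h2 : ‖(fun _ => (1:ℝ) : Fin n → ℝ)‖ = 1 := by
      rw [pi_norm_const (1:ℝ)]
      simp
    linarith
  have hxz : ∀ z : Fin n → ℤ, (∑ i, (z i : ℝ) • b i) = ce (fun i => (z i : ℝ)) := by
    intro z
    have : ce (fun i => (z i : ℝ)) = Bb.equivFun.symm (fun i => (z i : ℝ)) := rfl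
    rw [this, Module.Basis.equivFun_symm_apply]
    simp [hBb]
  set c : ℝ := π / ((K : ℝ) ^ 2 * σ ^ 2 * n) with hcdef
  have hcpos : 0 < c := by positivity
  refine Summable.of_nonneg_of_le (fun z => (Real.exp_pos _).le) (fun z => ?_)
    (summable_pi_exp n hcpos)
  have hsum_exp : (∏ i, rexp (-c * (z i : ℝ) ^ 2)) = rexp (∑ i, -c * (z i : ℝ) ^ 2) :=
    (Real.exp_sum _ _).symm
  rw [hsum_exp]
  apply Real.exp_le_exp.2
  set v : Fin n → ℝ := fun i => (z i : ℝ) with hv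
  have hcoord : ∀ i, (z i : ℝ) ^ 2 ≤ ‖v‖ ^ 2 := by
    intro i
    have h1 : |v i| ≤ ‖v‖ := by
      rw [← Real.norm_eq_abs]
      exact norm_le_pi_norm v i
    have := _root_.sq_abs (v i)
    nlinarith [abs_nonneg (v i), norm_nonneg v]
  have hsumsq : (∑ i, (z i : ℝ) ^ 2) ≤ n * ‖v‖ ^ 2 := by
    calc (∑ i, (z i : ℝ) ^ 2) ≤ ∑ _i : Fin n, ‖v‖ ^ 2 := Finset.sum_le_sum fun i _ => hcoord i
      _ = n * ‖v‖ ^ 2 := by rw [Finset.sum_const]; simp [mul_comm]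
  have hnormv : ‖v‖ ^ 2 ≤ (K : ℝ) ^ 2 * ‖ce v‖ ^ 2 := by
    have := hKv v
    nlinarith [norm_nonneg v, norm_nonneg (ce v), hKpos]
  have hxve : ‖∑ i, (z i : ℝ) • b i‖ = ‖ce v‖ := by rw [hxz z]
  rw [hxve]
  have hsum_eq : (∑ i, -c * (z i : ℝ) ^ 2) = -c * ∑ i, (z i : ℝ) ^ 2 := by
    rw [Finset.mul_sum]
  rw [hsum_eq]
  have hle : c * (∑ i, (z i : ℝ) ^ 2) ≤ π * ‖ce v‖ ^ 2 / σ ^ 2 := by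
    have h3 : (∑ i, (z i : ℝ) ^ 2) ≤ (n : ℝ) * ((K : ℝ) ^ 2 * ‖ce v‖ ^ 2) := by
      calc (∑ i, (z i : ℝ) ^ 2) ≤ n * ‖v‖ ^ 2 := hsumsq
        _ ≤ (n : ℝ) * ((K : ℝ) ^ 2 * ‖ce v‖ ^ 2) := by
            apply mul_le_mul_of_nonneg_left hnormv (by positivity)
    have hc_eq : c * ((n : ℝ) * ((K : ℝ) ^ 2 * ‖ce v‖ ^ 2)) = π * ‖ce v‖ ^ 2 / σ ^ 2 := by
      rw [hcdef]
      have hn' : (0:ℝ) < n := by exact_mod_cast hn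
      field_simp
    calc c * (∑ i, (z i : ℝ) ^ 2) ≤ c * ((n : ℝ) * ((K : ℝ) ^ 2 * ‖ce v‖ ^ 2)) :=
          mul_le_mul_of_nonneg_left h3 hcpos.le
      _ = π * ‖ce v‖ ^ 2 / σ ^ 2 := hc_eq
  have h9 : -π * ‖ce v‖ ^ 2 / σ ^ 2 = -(π * ‖ce v‖ ^ 2 / σ ^ 2) := by ring
  rw [h9]
  linarith
end Lat

end

theorem discrete_gaussian_tail_bound
    (n : ℕ) (hn : 0 < n) (b : Fin n → EuclideanSpace ℝ (Fin n))
    (hb : LinearIndependent ℝ b)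
    (L : Set (EuclideanSpace ℝ (Fin n)))
    (hL : L = {y | ∃ z : Fin n → ℤ, y = ∑ i, (z i : ℝ) • b i})
    (s r : ℝ) (hs : 0 < s) (hr : s * Real.sqrt (n / (2 * Real.pi)) ≤ r) :
    (∑' y : {y : EuclideanSpace ℝ (Fin n) | y ∈ L ∧ r ≤ ‖y‖},
        Real.exp (-Real.pi * ‖(y : EuclideanSpace ℝ (Fin n))‖ ^ 2 / s ^ 2)) ≤
      Real.exp (-Real.pi * (r / s - Real.sqrt (n / (2 * Real.pi))) ^ 2) *
        ∑' y : L, Real.exp (-Real.pi * ‖(y : EuclideanSpace ℝ (Fin n))‖ ^ 2 / s ^ 2) := by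
  have hπ := Real.pi_pos
  have hn' : (0:ℝ) < n := by exact_mod_cast hn
  set a : ℝ := Real.sqrt (n / (2 * Real.pi)) with ha
  have ha2 : a ^ 2 = n / (2 * Real.pi) := Real.sq_sqrt (by positivity)
  have hapos : 0 < a := Real.sqrt_pos.2 (by positivity)
  set x : (Fin n → ℤ) → EuclideanSpace ℝ (Fin n) := fun z => ∑ i, (z i : ℝ) • b i with hx
  have hadd : ∀ z w : Fin n → ℤ, x (z - w) = x z - x w := by
    intro z w
    rw [hx]
    simp only
    rw [← Finset.sum_sub_distrib]
    refine Finset.sum_congr rfl fun i _ => ?_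
    have h5 : (((z - w) i : ℤ) : ℝ) = (z i : ℝ) - (w i : ℝ) := by
      rw [Pi.sub_apply]; push_cast; ring
    rw [h5, sub_smul]
  have hsumm : ∀ σ : ℝ, 0 < σ → Summable fun z : Fin n → ℤ =>
      rexp (-π * ‖x z‖ ^ 2 / σ ^ 2) :=
    fun σ hσ => summable_lattice_gauss hn b hb hσ
  have hinj : Function.Injective x := by
    intro z w hzw
    have h0 : x (z - w) = 0 := by rw [hadd, hzw]; simp
    have h1 : ∑ i, (((z - w) i : ℤ) : ℝ) • b i = 0 := h0
    have hco := Fintype.linearIndependent_iff.1 hb (fun i => (((z - w) i : ℤ) : ℝ)) h1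
    funext i
    have h2 := hco i
    simp only [Pi.sub_apply] at h2
    have h3 : (z i : ℝ) = w i := by push_cast at h2; linarith
    exact_mod_cast h3
  have hmemL : ∀ z, x z ∈ L := fun z => by rw [hL]; exact ⟨z, rfl⟩
  -- reindex the full lattice sum
  let eL : (Fin n → ℤ) ≃ L :=
    Equiv.ofBijective (fun z => ⟨x z, hmemL z⟩)
      ⟨fun z w h => hinj (congrArg Subtype.val h), by
        rintro ⟨y, hy⟩
        rw [hL] at hy
        obtain ⟨z, hz⟩ := hy
        exact ⟨z, Subtype.ext hz.symm⟩⟩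
  have hLsum : (∑' y : L, rexp (-π * ‖(y : EuclideanSpace ℝ (Fin n))‖ ^ 2 / s ^ 2))
      = ∑' z : Fin n → ℤ, rexp (-π * ‖x z‖ ^ 2 / s ^ 2) :=
    (eL.tsum_eq fun y : L => rexp (-π * ‖(y : EuclideanSpace ℝ (Fin n))‖ ^ 2 / s ^ 2)).symm
  -- reindex the tail sum
  let eS : {z : Fin n → ℤ | r ≤ ‖x z‖} ≃ {y : EuclideanSpace ℝ (Fin n) | y ∈ L ∧ r ≤ ‖y‖} :=
    Equiv.ofBijective (fun w => ⟨x w.1, hmemL w.1, w.2⟩)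
      ⟨fun w w' h => Subtype.ext (hinj (congrArg Subtype.val h)), by
        rintro ⟨y, hy1, hy2⟩
        rw [hL] at hy1
        obtain ⟨z, hz⟩ := hy1
        refine ⟨⟨z, ?_⟩, Subtype.ext hz.symm⟩
        rw [hz] at hy2
        exact hy2⟩
  have hSsum : (∑' y : {y : EuclideanSpace ℝ (Fin n) | y ∈ L ∧ r ≤ ‖y‖},
        rexp (-π * ‖(y : EuclideanSpace ℝ (Fin n))‖ ^ 2 / s ^ 2))
      = ∑' w : {z : Fin n → ℤ | r ≤ ‖x z‖}, rexp (-π * ‖x w.1‖ ^ 2 / s ^ 2) :=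
    (eS.tsum_eq fun y : {y : EuclideanSpace ℝ (Fin n) | y ∈ L ∧ r ≤ ‖y‖} =>
      rexp (-π * ‖(y : EuclideanSpace ℝ (Fin n))‖ ^ 2 / s ^ 2)).symm
  rw [hLsum, hSsum]
  -- numeric setup
  set u : ℝ := r / s with hu_def
  have hau : a ≤ u := by
    rw [hu_def, le_div_iff₀ hs]
    linarith [hr]
  have hupos : 0 < u := lt_of_lt_of_le hapos hau
  have hr0 : 0 < r := by
    have : 0 < s * a := by positivity
    linarith [hr]
  have hrsu : r = s * u := by rw [hu_def]; field_simp
  set σ₂ : ℝ := s * u / a with hσ₂def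
  have hσ₂s : s ≤ σ₂ := by
    rw [hσ₂def, le_div_iff₀ hapos]
    nlinarith
  have hσ₂pos : 0 < σ₂ := lt_of_lt_of_le hs hσ₂s
  set C : ℝ := rexp (-π * (u ^ 2 - a ^ 2)) with hC
  -- pointwise comparison on the tail
  have hpoint : ∀ X : ℝ, r ≤ X → rexp (-π * X ^ 2 / s ^ 2) ≤ C * rexp (-π * X ^ 2 / σ₂ ^ 2) := by
    intro X hXr
    rw [hC, ← Real.exp_add]
    apply Real.exp_le_exp.2
    have hX2 : s ^ 2 * u ^ 2 ≤ X ^ 2 := by nlinarith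
    have hD : (0:ℝ) < s ^ 2 * u ^ 2 := by positivity
    have e1 : -π * X ^ 2 / s ^ 2 = (-π * X ^ 2 * u ^ 2) / (s ^ 2 * u ^ 2) := by
      rw [div_eq_div_iff (by positivity) hD.ne']
      ring
    have e2 : -π * X ^ 2 / σ₂ ^ 2 = (-π * X ^ 2 * a ^ 2) / (s ^ 2 * u ^ 2) := by
      rw [hσ₂def, div_eq_div_iff (by positivity) hD.ne']
      field_simp
    rw [e1, e2]
    have e3 : -π * (u ^ 2 - a ^ 2) + (-π * X ^ 2 * a ^ 2) / (s ^ 2 * u ^ 2)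
        = (-π * (u ^ 2 - a ^ 2) * (s ^ 2 * u ^ 2) + -π * X ^ 2 * a ^ 2) / (s ^ 2 * u ^ 2) := by
      field_simp
    rw [e3, div_le_div_iff₀ hD hD]
    have hua : a ^ 2 ≤ u ^ 2 := by nlinarith
    nlinarith [mul_le_mul_of_nonneg_left hX2 (mul_nonneg hπ.le (sub_nonneg.2 hua))]
  -- main chain
  have hρnonneg : 0 ≤ ∑' z : Fin n → ℤ, rexp (-π * ‖x z‖ ^ 2 / s ^ 2) :=
    tsum_nonneg fun z => (Real.exp_pos _).le
  calc (∑' w : {z : Fin n → ℤ | r ≤ ‖x z‖}, rexp (-π * ‖x w.1‖ ^ 2 / s ^ 2))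
      ≤ ∑' z : Fin n → ℤ, C * rexp (-π * ‖x z‖ ^ 2 / σ₂ ^ 2) := by
        refine Summable.tsum_le_tsum_of_inj
          (f := fun w : {z : Fin n → ℤ | r ≤ ‖x z‖} => rexp (-π * ‖x w.1‖ ^ 2 / s ^ 2))
          (g := fun z : Fin n → ℤ => C * rexp (-π * ‖x z‖ ^ 2 / σ₂ ^ 2))
          Subtype.val Subtype.val_injective
          (fun z _ => mul_nonneg (by rw [hC]; positivity) (Real.exp_pos _).le)
          (fun w => hpoint ‖x w.1‖ w.2)
          ((hsumm s hs).subtype _) ((hsumm σ₂ hσ₂pos).mul_left C)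
    _ = C * ∑' z : Fin n → ℤ, rexp (-π * ‖x z‖ ^ 2 / σ₂ ^ 2) := tsum_mul_left
    _ ≤ C * (σ₂ ^ n * (s ^ n)⁻¹ * ∑' z : Fin n → ℤ, rexp (-π * ‖x z‖ ^ 2 / s ^ 2)) := by
        apply mul_le_mul_of_nonneg_left ?_ (by rw [hC]; positivity)
        have hmono := theta_mono x hadd hsumm hs hσ₂s
        have hσ₂n : (0:ℝ) < σ₂ ^ n := by positivity
        calc (∑' z : Fin n → ℤ, rexp (-π * ‖x z‖ ^ 2 / σ₂ ^ 2))
            = σ₂ ^ n * ((σ₂ ^ n)⁻¹ * ∑' z : Fin n → ℤ, rexp (-π * ‖x z‖ ^ 2 / σ₂ ^ 2)) := by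
              field_simp
          _ ≤ σ₂ ^ n * ((s ^ n)⁻¹ * ∑' z : Fin n → ℤ, rexp (-π * ‖x z‖ ^ 2 / s ^ 2)) :=
              mul_le_mul_of_nonneg_left hmono hσ₂n.le
          _ = σ₂ ^ n * (s ^ n)⁻¹ * ∑' z : Fin n → ℤ, rexp (-π * ‖x z‖ ^ 2 / s ^ 2) := by
              ring
    _ = (C * (σ₂ ^ n * (s ^ n)⁻¹)) * ∑' z : Fin n → ℤ, rexp (-π * ‖x z‖ ^ 2 / s ^ 2) := by
        ring
    _ ≤ rexp (-π * (u - a) ^ 2) * ∑' z : Fin n → ℤ, rexp (-π * ‖x z‖ ^ 2 / s ^ 2) := by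
        apply mul_le_mul_of_nonneg_right ?_ hρnonneg
        -- scalar inequality
        set v : ℝ := u / a with hv
        have hv1 : 1 ≤ v := by rw [hv, le_div_iff₀ hapos]; linarith
        have hvpos : 0 < v := lt_of_lt_of_le one_pos hv1
        have hfac : σ₂ ^ n * (s ^ n)⁻¹ = v ^ n := by
          have e : σ₂ = s * v := by rw [hσ₂def, hv]; ring
          rw [e, mul_pow]
          field_simp
        rw [hfac]
        have hvn : v ^ n = rexp (n * Real.log v) := by
          rw [Real.exp_nat_mul, Real.exp_log hvpos]
        rw [hvn, hC, ← Real.exp_add]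
        apply Real.exp_le_exp.2
        have hlog : Real.log v ≤ v - 1 := Real.log_le_sub_one_of_pos hvpos
        have hnlog : (n:ℝ) * Real.log v ≤ n * (v - 1) :=
          mul_le_mul_of_nonneg_left hlog hn'.le
        have hn2 : 2 * π * a ^ 2 = n := by
          rw [ha2]
          field_simp
        have hfin : -π * (u ^ 2 - a ^ 2) + (n:ℝ) * (v - 1) = -π * (u - a) ^ 2 := by
          rw [← hn2, hv]
          field_simp
          ring
        linarith
    _ = rexp (-π * (r / s - a) ^ 2) * ∑' z : Fin n → ℤ, rexp (-π * ‖x z‖ ^ 2 / s ^ 2) := by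
        rw [hu_def]
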